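/- Let σ : Ω̄ → ℝ be continuous with 0 < c ≤ σ ≤ M on a bounded domain Ω with chord lengths bounded by D. Define, for bounded measurable u on Ω × Sⁿ⁻¹, (Ku)(x,θ) = ∫₀^{τ(x,θ)} α(x, x−tθ) σ(x−tθ) ⟨u⟩(x−tθ) dt, where ⟨u⟩(y) = (1/|Sⁿ⁻¹|)∫_{Sⁿ⁻¹} u(y,ω) dω and τ(x,θ) = ‖x − x_{θ−}‖. Then ‖Ku‖_∞ ≤ (1 − e^{−MD}) ‖u‖_∞, so K is a contraction on L^∞(Ω × Sⁿ⁻¹). -/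

import Mathlib

open MeasureTheory

lemma avg_abs_le {α : Type*} [MeasurableSpace α] (μ : Measure α) [IsFiniteMeasure μ]
    (f : α → ℝ) (B : ℝ) (hB : 0 ≤ B) (hf : ∀ z, |f z| ≤ B) : |⨍ x, f x ∂μ| ≤ B := by
  rw [average_eq]
  have h1 : |∫ x, f x ∂μ| ≤ B * (μ Set.univ).toReal :=
    norm_integral_le_of_norm_le_const (μ := μ) (f := f) (Filter.Eventually.of_forall fun x => hf x)
  rw [smul_eq_mul, abs_mul, abs_inv, abs_of_nonneg measureReal_nonneg, measureReal_def]
  rcases eq_or_ne (μ Set.univ).toReal 0 with h | h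
  · simp [h, hB]
  · calc (μ Set.univ).toReal⁻¹ * |∫ x, f x ∂μ|
        ≤ (μ Set.univ).toReal⁻¹ * (B * (μ Set.univ).toReal) := by
          apply mul_le_mul_of_nonneg_left h1 (by positivity)
    _ = B := by field_simp

theorem K_contraction {n : ℕ}
    (Ω : Set (EuclideanSpace ℝ (Fin n))) (hΩo : IsOpen Ω)
    (hΩb : Bornology.IsBounded Ω)
    (σ : EuclideanSpace ℝ (Fin n) → ℝ) (hσ : ContinuousOn σ (closure Ω))
    (c M D : ℝ) (hc : 0 < c) (hD : 0 ≤ D)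
    (hbd : ∀ y ∈ closure Ω, c ≤ σ y ∧ σ y ≤ M)
    (τ : EuclideanSpace ℝ (Fin n) → EuclideanSpace ℝ (Fin n) → ℝ)
    (hτ : ∀ x θ, 0 ≤ τ x θ ∧ τ x θ ≤ D)
    (μS : Measure (EuclideanSpace ℝ (Fin n))) [IsFiniteMeasure μS]
    (u : EuclideanSpace ℝ (Fin n) × EuclideanSpace ℝ (Fin n) → ℝ)
    (hu : Measurable u) (B : ℝ) (hub : ∀ z, |u z| ≤ B) :
    ∀ x θ : EuclideanSpace ℝ (Fin n), ‖θ‖ = 1 →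
      (∀ s ∈ Set.Icc (0:ℝ) (τ x θ), x - s • θ ∈ closure Ω) →
      |∫ t in (0:ℝ)..(τ x θ),
          Real.exp (-∫ s in (0:ℝ)..t, σ (x - s • θ)) * σ (x - t • θ) *
            (⨍ ω, u (x - t • θ, ω) ∂μS)| ≤ (1 - Real.exp (-(M * D))) * B := by
  intro x θ hθ hmem
  obtain ⟨hτ0, hτD⟩ := hτ x θ
  set T := τ x θ with hT
  have hB : 0 ≤ B := le_trans (abs_nonneg _) (hub (x, θ))
  have hcM : c ≤ M := le_trans (hbd _ (hmem 0 ⟨le_refl _, hτ0⟩)).1 (hbd _ (hmem 0 ⟨le_refl _, hτ0⟩)).2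
  -- g : σ along the ray, continuous on [0,T]
  set g : ℝ → ℝ := fun t => σ (x - t • θ) with hg
  have hgcont : ContinuousOn g (Set.Icc 0 T) := by
    apply hσ.comp
    · exact (continuous_const.sub (continuous_id.smul continuous_const)).continuousOn
    · exact hmem
  -- h : continuous extension of g to ℝ
  set h : ℝ → ℝ := Set.IccExtend hτ0 ((Set.Icc (0:ℝ) T).restrict g) with hh
  have hhcont : Continuous h :=
    Continuous.Icc_extend' (continuousOn_iff_continuous_restrict.mp hgcont)
  have hhg : ∀ t ∈ Set.Icc (0:ℝ) T, h t = g t := fun t ht => by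
    simp [hh, Set.IccExtend_of_mem hτ0 _ ht]
    rfl
  have hhb : ∀ t : ℝ, c ≤ h t ∧ h t ≤ M := by
    intro t
    have : h t = g (Set.projIcc 0 T hτ0 t) := rfl
    rw [this]
    exact hbd _ (hmem _ (Set.projIcc 0 T hτ0 t).2)
  have hhpos : ∀ t : ℝ, 0 ≤ h t := fun t => le_trans hc.le (hhb t).1
  -- A : antiderivative of h
  set A : ℝ → ℝ := fun t => ∫ s in (0:ℝ)..t, h s with hA
  have hAderiv : ∀ t : ℝ, HasDerivAt A (h t) t := fun t =>
    (hhcont.integral_hasStrictDerivAt 0 t).hasDerivAt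
  -- F : antiderivative of h t * exp (-A t)
  set F : ℝ → ℝ := fun t => -Real.exp (-A t) with hF
  have hFderiv : ∀ t : ℝ, HasDerivAt F (h t * Real.exp (-A t)) t := by
    intro t
    have h1 : HasDerivAt (fun s => -A s) (-h t) t := (hAderiv t).neg
    have h2 : HasDerivAt (fun s => Real.exp (-A s)) (Real.exp (-A t) * -h t) t :=
      h1.exp
    have := h2.neg
    rw [show h t * Real.exp (-A t) = -(Real.exp (-A t) * -h t) by ring]
    exact this
  -- integral of h * exp(-A) over [0,T]
  have hAcont : Continuous A := by
    apply continuous_iff_continuousAt.mpr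
    exact fun t => (hAderiv t).continuousAt
  have hαcont : Continuous fun t => h t * Real.exp (-A t) :=
    hhcont.mul (Real.continuous_exp.comp hAcont.neg)
  have hkey : ∫ t in (0:ℝ)..T, h t * Real.exp (-A t) = 1 - Real.exp (-A T) := by
    rw [intervalIntegral.integral_eq_sub_of_hasDerivAt (fun t _ => hFderiv t)
      (hαcont.intervalIntegrable 0 T)]
    simp [hF, hA]
    ring
  -- A T ≤ M * D
  have hAT : A T ≤ M * D := by
    have h1 : A T ≤ ∫ t in (0:ℝ)..T, M := by
      apply intervalIntegral.integral_mono_on hτ0 (hhcont.intervalIntegrable 0 T)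
        (intervalIntegrable_const)
      exact fun t _ => (hhb t).2
    simp only [intervalIntegral.integral_const, smul_eq_mul, sub_zero] at h1
    calc A T ≤ T * M := h1
      _ ≤ D * M := by
          apply mul_le_mul_of_nonneg_right hτD (le_trans hc.le hcM)
      _ = M * D := mul_comm _ _
  have hexp : 1 - Real.exp (-A T) ≤ 1 - Real.exp (-(M * D)) := by
    have := Real.exp_le_exp.mpr (neg_le_neg hAT)
    linarith
  -- the average function
  set v : ℝ → ℝ := fun t => ⨍ ω, u (x - t • θ, ω) ∂μS with hv
  have hvb : ∀ t, |v t| ≤ B := fun t =>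
    avg_abs_le μS (fun ω => u (x - t • θ, ω)) B hB (fun ω => hub _)
  have hvmeas : Measurable v := by
    have hk : Measurable fun t : ℝ => ∫ ω, u (x - t • θ, ω) ∂μS := by
      have hm : Measurable fun p : ℝ × EuclideanSpace ℝ (Fin n) =>
          u (x - p.1 • θ, p.2) := by
        apply hu.comp
        exact ((continuous_const.sub (continuous_fst.smul
          continuous_const)).prodMk continuous_snd).measurable
      exact (hm.stronglyMeasurable.integral_prod_right').measurable
    have : v = fun t => (μS Set.univ).toReal⁻¹ • ∫ ω, u (x - t • θ, ω) ∂μS := by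
      funext t; simp only [hv]; exact average_eq (μ := μS) (fun ω => u (x - t • θ, ω))
    rw [this]
    exact (hk.const_smul ((μS Set.univ).toReal⁻¹))
  -- rewrite the integral
  set f : ℝ → ℝ := fun t => h t * Real.exp (-A t) * v t with hf
  have hrw : (∫ t in (0:ℝ)..T,
      Real.exp (-∫ s in (0:ℝ)..t, σ (x - s • θ)) * σ (x - t • θ) *
        (⨍ ω, u (x - t • θ, ω) ∂μS)) = ∫ t in (0:ℝ)..T, f t := by
    apply intervalIntegral.integral_congr
    intro t ht
    rw [Set.uIcc_of_le hτ0] at ht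
    have hAt : (∫ s in (0:ℝ)..t, σ (x - s • θ)) = A t := by
      apply intervalIntegral.integral_congr
      intro s hs
      rw [Set.uIcc_of_le ht.1] at hs
      exact (hhg s ⟨hs.1, le_trans hs.2 ht.2⟩).symm
    simp only [hf, hv, hAt, hhg t ht]
    ring
  -- integrability
  have hfint : IntervalIntegrable f volume 0 T := by
    rw [intervalIntegrable_iff_integrableOn_Ioc_of_le hτ0]
    apply Integrable.mono' (g := fun _ => M * B) (integrable_const _)
    · exact ((hhcont.mul (Real.continuous_exp.comp hAcont.neg)).measurable.mul
        hvmeas).aestronglyMeasurable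
    · filter_upwards [ae_restrict_mem measurableSet_Ioc] with t ht
      have hM0 : 0 ≤ M := le_trans hc.le hcM
      have hApos : 0 ≤ A t :=
        intervalIntegral.integral_nonneg ht.1.le (fun s _ => hhpos s)
      have he1 : Real.exp (-A t) ≤ 1 := Real.exp_le_one_iff.mpr (neg_nonpos.mpr hApos)
      have h1 : (0:ℝ) < Real.exp (-A t) := Real.exp_pos _
      calc ‖f t‖ = h t * Real.exp (-A t) * |v t| := by
            rw [Real.norm_eq_abs, hf, abs_mul, abs_of_nonneg
              (mul_nonneg (hhpos t) h1.le)]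
      _ ≤ M * 1 * B :=
            mul_le_mul (mul_le_mul (hhb t).2 he1 h1.le hM0) (hvb t) (abs_nonneg _)
              (mul_nonneg hM0 zero_le_one)
      _ = M * B := by ring
  have habs : |∫ t in (0:ℝ)..T, f t| ≤ ∫ t in (0:ℝ)..T, h t * Real.exp (-A t) * B := by
    have h1 := intervalIntegral.abs_integral_le_integral_abs (μ := volume) (f := f) hτ0
    refine le_trans h1 ?_
    apply intervalIntegral.integral_mono_on hτ0 hfint.abs
      ((hαcont.mul continuous_const).intervalIntegrable 0 T)
    intro t _
    have hα : 0 ≤ h t * Real.exp (-A t) := mul_nonneg (hhpos t) (Real.exp_pos _).le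
    calc |f t| = h t * Real.exp (-A t) * |v t| := by
          rw [hf, abs_mul, abs_of_nonneg hα]
    _ ≤ h t * Real.exp (-A t) * B := mul_le_mul_of_nonneg_left (hvb t) hα
  have hfinal : (∫ t in (0:ℝ)..T, h t * Real.exp (-A t) * B)
      = (1 - Real.exp (-A T)) * B := by
    rw [← hkey, ← intervalIntegral.integral_mul_const]
  rw [hrw]
  calc |∫ t in (0:ℝ)..T, f t| ≤ (1 - Real.exp (-A T)) * B := by
        rw [← hfinal]; exact habs
  _ ≤ (1 - Real.exp (-(M * D))) * B := mul_le_mul_of_nonneg_right hexp hB
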